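/- Every edge-weighted graph G = (V,E) with integer edge weights in {1,...,W} contains a (β, β⁻)-w-EDCS, for any integer parameters β ≥ 3 and β⁻ with β ≥ β⁻ + 2. -/

import Mathlib

open scoped Classical

variable {V : Type*} [Fintype V]

/-- Degree of a vertex in a simple graph. -/
noncomputable def sdeg (H : SimpleGraph V) (v : V) : ℕ :=
  (Finset.univ.filter (fun u => H.Adj v u)).card

/-- Weighted degree of a vertex in a simple graph with edge weights `w`. -/
noncomputable def swdeg (H : SimpleGraph V) (w : V → V → ℕ) (v : V) : ℕ :=
  ∑ u ∈ Finset.univ.filter (fun u => H.Adj v u), w v u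

/-- The weight function is symmetric and takes values in `{1, ..., W}` on edges of `G`. -/
def ValidWeights (W : ℕ) (G : SimpleGraph V) (w : V → V → ℕ) : Prop :=
  (∀ u v, w u v = w v u) ∧ ∀ u v, G.Adj u v → 1 ≤ w u v ∧ w u v ≤ W

/-- `H` is a `(β, βm)`-w-EDCS of the edge-weighted simple graph `(G, w)`. -/
def IsWEDCS (G H : SimpleGraph V) (w : V → V → ℕ) (β βm : ℕ) : Prop :=
  H ≤ G ∧
  (∀ u v, H.Adj u v → swdeg H w u + swdeg H w v ≤ β * w u v) ∧
  (∀ u v, G.Adj u v → ¬ H.Adj u v → βm * w u v ≤ swdeg H w u + swdeg H w v)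

/-- `M` is a matching of the simple graph `H`: a set of pairwise vertex-disjoint edges. -/
def IsSMatching (H : SimpleGraph V) (M : Finset (V × V)) : Prop :=
  (∀ e ∈ M, H.Adj e.1 e.2) ∧
  ∀ e ∈ M, ∀ e' ∈ M, e ≠ e' →
    e.1 ≠ e'.1 ∧ e.1 ≠ e'.2 ∧ e.2 ≠ e'.1 ∧ e.2 ≠ e'.2

/-- Total weight of a matching. -/
def smwt (w : V → V → ℕ) (M : Finset (V × V)) : ℕ := ∑ e ∈ M, w e.1 e.2

set_option linter.unusedSectionVars false in
lemma swdeg_eq (H : SimpleGraph V) (w : V → V → ℕ) (v : V) :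
    swdeg H w v = ∑ u, if H.Adj v u then w v u else 0 :=
  Finset.sum_filter _ _

lemma edge_comm' (u v : V) : SimpleGraph.edge u v = SimpleGraph.edge v u := by
  ext a b; rw [SimpleGraph.edge_adj, SimpleGraph.edge_adj]; tauto

lemma swdeg_sup_edge_left (H : SimpleGraph V) (w : V → V → ℕ) {u v : V} (hne : u ≠ v)
    (hadj : ¬ H.Adj u v) :
    swdeg (H ⊔ SimpleGraph.edge u v) w u = swdeg H w u + w u v := by
  rw [swdeg_eq, swdeg_eq]
  have hv : w u v = ∑ t, if t = v then w u t else 0 := by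
    rw [Finset.sum_ite_eq' Finset.univ v (fun t => w u t), if_pos (Finset.mem_univ v)]
  rw [hv, ← Finset.sum_add_distrib]
  refine Finset.sum_congr rfl (fun t _ => ?_)
  by_cases htv : t = v
  · have hadjt : ¬ H.Adj u t := htv ▸ hadj
    rw [if_pos ((SimpleGraph.sup_adj _ _ _ _).mpr
        (Or.inr ((SimpleGraph.edge_adj u v u t).mpr ⟨Or.inl ⟨rfl, htv⟩, htv ▸ hne⟩))),
      if_neg hadjt, if_pos htv, Nat.zero_add, htv]
  · rw [if_neg htv, Nat.add_zero]
    by_cases hadj' : H.Adj u t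
    · rw [if_pos hadj', if_pos ((SimpleGraph.sup_adj _ _ _ _).mpr (Or.inl hadj'))]
    · rw [if_neg hadj', if_neg]
      intro h
      rcases (SimpleGraph.sup_adj _ _ _ _).mp h with h | h
      · exact hadj' h
      · rcases ((SimpleGraph.edge_adj u v u t).mp h) with ⟨⟨h3, h4⟩ | ⟨h3, h4⟩, h5⟩
        · exact htv h4
        · exact hne h3

lemma swdeg_sup_edge_right (H : SimpleGraph V) (w : V → V → ℕ)
    (hsymm : ∀ a b, w a b = w b a) {u v : V} (hne : u ≠ v) (hadj : ¬ H.Adj u v) :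
    swdeg (H ⊔ SimpleGraph.edge u v) w v = swdeg H w v + w u v := by
  rw [edge_comm', swdeg_sup_edge_left H w hne.symm (fun h => hadj h.symm), hsymm v u]

lemma swdeg_sup_edge_other (H : SimpleGraph V) (w : V → V → ℕ) {u v t : V}
    (htu : t ≠ u) (htv : t ≠ v) :
    swdeg (H ⊔ SimpleGraph.edge u v) w t = swdeg H w t := by
  rw [swdeg_eq, swdeg_eq]
  refine Finset.sum_congr rfl (fun s _ => ?_)
  by_cases hadj' : H.Adj t s
  · rw [if_pos ((SimpleGraph.sup_adj _ _ _ _).mpr (Or.inl hadj')), if_pos hadj']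
  · rw [if_neg hadj', if_neg]
    intro h
    rcases (SimpleGraph.sup_adj _ _ _ _).mp h with h | h
    · exact hadj' h
    · rcases (SimpleGraph.edge_adj u v t s).mp h with ⟨⟨h3, h4⟩ | ⟨h3, h4⟩, h5⟩
      · exact htu h3
      · exact htv h3

lemma sum_sub_two {f g : V → ℤ} {u v : V} (hne : u ≠ v)
    (h : ∀ t, t ≠ u → t ≠ v → f t = g t) :
    ∑ t, f t = ∑ t, g t + (f u - g u) + (f v - g v) := by
  have h1 : ∑ t ∈ ({u, v} : Finset V), (f t - g t) = ∑ t, (f t - g t) :=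
    Finset.sum_subset (Finset.subset_univ _) (fun t _ ht => by
      simp only [Finset.mem_insert, Finset.mem_singleton] at ht
      push_neg at ht
      rw [h t ht.1 ht.2, sub_self])
  rw [Finset.sum_pair hne] at h1
  have h2 : ∑ t, (f t - g t) = ∑ t, f t - ∑ t, g t := Finset.sum_sub_distrib f g
  linarith

noncomputable def sPhi (β : ℕ) (w : V → V → ℕ) (H : SimpleGraph V) : ℤ :=
  (2 * (β : ℤ) - 2) * ∑ t, (swdeg H (fun a b => w a b * w a b) t : ℤ)
    + ∑ t, (swdeg H w t : ℤ) - 2 * ∑ t, (swdeg H w t : ℤ) ^ 2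

lemma key_sum (H : SimpleGraph V) {u v : V} (hne : u ≠ v) (hadj : ¬ H.Adj u v)
    (ω : V → V → ℕ) (hs : ∀ a b, ω a b = ω b a) (F : ℕ → ℤ) :
    ∑ t, F (swdeg (H ⊔ SimpleGraph.edge u v) ω t) = ∑ t, F (swdeg H ω t)
      + (F (swdeg H ω u + ω u v) - F (swdeg H ω u))
      + (F (swdeg H ω v + ω u v) - F (swdeg H ω v)) := by
  rw [sum_sub_two hne (fun t htu htv => congrArg F (swdeg_sup_edge_other H ω htu htv)),
    swdeg_sup_edge_left H ω hne hadj, swdeg_sup_edge_right H ω hs hne hadj]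

lemma sPhi_sup_edge (β : ℕ) (w : V → V → ℕ) (hsymm : ∀ a b, w a b = w b a)
    (H : SimpleGraph V) {u v : V} (hne : u ≠ v) (hadj : ¬ H.Adj u v) :
    sPhi β w (H ⊔ SimpleGraph.edge u v) = sPhi β w H
      + ((2 * (β : ℤ) - 2) * (2 * (w u v : ℤ) ^ 2) + 2 * (w u v : ℤ)
      - 2 * (((swdeg H w u : ℤ) + (w u v : ℤ)) ^ 2 - (swdeg H w u : ℤ) ^ 2
           + ((swdeg H w v : ℤ) + (w u v : ℤ)) ^ 2 - (swdeg H w v : ℤ) ^ 2)) := by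
  have hs2 : ∀ a b, w a b * w a b = w b a * w b a := fun a b => by rw [hsymm]
  unfold sPhi
  rw [key_sum H hne hadj (fun a b => w a b * w a b) hs2 (fun n => (n : ℤ)),
    key_sum H hne hadj w hsymm (fun n => (n : ℤ)),
    key_sum H hne hadj w hsymm (fun n => (n : ℤ) ^ 2)]
  push_cast
  ring

/-- Every edge-weighted graph with integer weights in `{1,...,W}`
contains a `(β, β⁻)`-w-EDCS, for any integers `β ≥ 3` and `β⁻` with `β ≥ β⁻ + 2`. -/
theorem wedcs_exists
    {V : Type*} [Fintype V]
    (W β βm : ℕ) (hW : 1 ≤ W) (hβ3 : 3 ≤ β) (hββm : βm + 2 ≤ β)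
    (G : SimpleGraph V) (w : V → V → ℕ)
    (hw : ValidWeights W G w) :
    ∃ H : SimpleGraph V, IsWEDCS G H w β βm := by
  classical
  obtain ⟨hsymm, hbound⟩ := hw
  obtain ⟨H, hHmem, hmax⟩ := Finset.exists_max_image
    (Finset.univ.filter (fun H : SimpleGraph V => H ≤ G)) (sPhi β w)
    ⟨⊥, Finset.mem_filter.mpr ⟨Finset.mem_univ _, bot_le⟩⟩
  have hHG : H ≤ G := (Finset.mem_filter.mp hHmem).2
  refine ⟨H, hHG, ?_, ?_⟩
  · -- upper bound condition
    intro u v huv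
    by_contra hcon
    push_neg at hcon
    have hne : u ≠ v := huv.ne
    have hx : 1 ≤ w u v := (hbound u v (hHG huv)).1
    have hedge_le : SimpleGraph.edge u v ≤ H :=
      le_sup_right.trans (le_of_eq (SimpleGraph.sup_edge_of_adj H huv))
    have h0adj : ¬ (H \ SimpleGraph.edge u v).Adj u v := by
      rw [SimpleGraph.sdiff_adj]
      rintro ⟨-, h2⟩
      exact h2 ((SimpleGraph.edge_adj u v u v).mpr ⟨Or.inl ⟨rfl, rfl⟩, hne⟩)
    have hsup : (H \ SimpleGraph.edge u v) ⊔ SimpleGraph.edge u v = H :=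
      sdiff_sup_cancel hedge_le
    have ha := swdeg_sup_edge_left (H \ SimpleGraph.edge u v) w hne h0adj
    have hb := swdeg_sup_edge_right (H \ SimpleGraph.edge u v) w hsymm hne h0adj
    rw [hsup] at ha hb
    have hphi := sPhi_sup_edge β w hsymm (H \ SimpleGraph.edge u v) hne h0adj
    rw [hsup] at hphi
    have hmax0 : sPhi β w H ≤ sPhi β w (H \ SimpleGraph.edge u v) →
        sPhi β w H = sPhi β w (H \ SimpleGraph.edge u v) := fun h =>
      le_antisymm h (hmax _ (Finset.mem_filter.mpr ⟨Finset.mem_univ _, sdiff_le.trans hHG⟩))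
    have hmaxle : sPhi β w (H \ SimpleGraph.edge u v) ≤ sPhi β w H :=
      hmax _ (Finset.mem_filter.mpr ⟨Finset.mem_univ _, sdiff_le.trans hHG⟩)
    -- cast facts
    set A := (swdeg (H \ SimpleGraph.edge u v) w u : ℤ) with hA
    set B := (swdeg (H \ SimpleGraph.edge u v) w v : ℤ) with hB
    set X := (w u v : ℤ) with hX
    have hX1 : (1 : ℤ) ≤ X := by rw [hX]; exact_mod_cast hx
    rw [ha, hb] at hcon
    have hcon' : (β : ℤ) * X < (A + X) + (B + X) := by
      rw [hA, hB, hX]; exact_mod_cast hcon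
    nlinarith [hphi, hmaxle, hX1, hcon', mul_pos (by linarith : (0:ℤ) < X)
      (by linarith : (0:ℤ) < (A + X) + (B + X) - (β : ℤ) * X)]
  · -- lower bound condition
    intro u v hGuv hnot
    by_contra hcon
    push_neg at hcon
    have hne : u ≠ v := hGuv.ne
    have hx : 1 ≤ w u v := (hbound u v hGuv).1
    have hedge_le : SimpleGraph.edge u v ≤ G :=
      le_sup_right.trans (le_of_eq (SimpleGraph.sup_edge_of_adj G hGuv))
    have hle : H ⊔ SimpleGraph.edge u v ≤ G := sup_le hHG hedge_le
    have hphi := sPhi_sup_edge β w hsymm H hne hnot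
    have hmaxle : sPhi β w (H ⊔ SimpleGraph.edge u v) ≤ sPhi β w H :=
      hmax _ (Finset.mem_filter.mpr ⟨Finset.mem_univ _, hle⟩)
    set A := (swdeg H w u : ℤ) with hA
    set B := (swdeg H w v : ℤ) with hB
    set X := (w u v : ℤ) with hX
    have hX1 : (1 : ℤ) ≤ X := by rw [hX]; exact_mod_cast hx
    have hcon' : A + B < (βm : ℤ) * X := by rw [hA, hB, hX]; exact_mod_cast hcon
    have hβm : (βm : ℤ) + 2 ≤ (β : ℤ) := by exact_mod_cast hββm
    have hd : A + B ≤ ((β : ℤ) - 2) * X - 1 := by nlinarith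
    nlinarith [hphi, hmaxle, hX1, hd, mul_nonneg (by linarith : (0:ℤ) ≤ X)
      (by linarith : (0:ℤ) ≤ ((β : ℤ) - 2) * X - 1 - (A + B))]
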